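/- arXiv:1605.00081 — 4 statements merged into one kernel-verified Lean document; each statement's English description precedes it below -/
import Mathlib

section
/- Let ⊗ be a continuous t-norm on [0,1], let X be a partially ordered compact space, and let A ⊆ X be a closed upper subset. Then: (1) A ≠ ∅ if and only if Φ_A(1) = 1, where 1 denotes the constant function with value 1; (2) A is irreducible if and only if Φ_A(ψ₁⊗ψ₂) = Φ_A(ψ₁)⊗Φ_A(ψ₂) for all ψ₁, ψ₂ ∈ CX. -/
open unitInterval Set

/-- A continuous t-norm on the unit interval `[0,1]`. -/
structure ContinuousTNorm where
  mul : I → I → I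
  comm : ∀ x y, mul x y = mul y x
  assoc : ∀ x y z, mul (mul x y) z = mul x (mul y z)
  mono : ∀ ⦃x₁ x₂ y₁ y₂ : I⦄, x₁ ≤ x₂ → y₁ ≤ y₂ → mul x₁ y₁ ≤ mul x₂ y₂
  continuous : Continuous fun p : I × I => mul p.1 p.2
  one_mul' : ∀ x, mul 1 x = x

/-- The `n`-fold `⊗`-power `xⁿ`. -/
def ContinuousTNorm.pow (T : ContinuousTNorm) (x : I) : ℕ → I
  | 0 => 1
  | n + 1 => T.mul x (T.pow x n)


/-- A continuous antitone (monotone of type `X → [0,1]ᵒᵖ`) map. -/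
structure CMap (X : Type*) [TopologicalSpace X] [Preorder X] where
  toFun : X → I
  continuous' : Continuous toFun
  antitone' : Antitone toFun

namespace CMap

variable {X : Type*} [TopologicalSpace X] [Preorder X]

/-- The constant map `1`. -/
def one : CMap X := ⟨fun _ => 1, continuous_const, fun _ _ _ => le_rfl⟩

/-- Pointwise tensor `ψ₁ ⊗ ψ₂`. -/
def tens (T : ContinuousTNorm) (ψ₁ ψ₂ : CMap X) : CMap X where
  toFun x := T.mul (ψ₁.toFun x) (ψ₂.toFun x)
  continuous' := T.continuous.comp (ψ₁.continuous'.prodMk ψ₂.continuous')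
  antitone' := fun _ _ h => T.mono (ψ₁.antitone' h) (ψ₂.antitone' h)

/-- Pointwise action `u ⊗ ψ` of a scalar `u ∈ [0,1]`. -/
def smul (T : ContinuousTNorm) (u : I) (ψ : CMap X) : CMap X where
  toFun x := T.mul u (ψ.toFun x)
  continuous' := T.continuous.comp (continuous_const.prodMk ψ.continuous')
  antitone' := fun _ _ h => T.mono le_rfl (ψ.antitone' h)

/-- Pointwise binary supremum `ψ₁ ∨ ψ₂`. -/
noncomputable def sup (ψ₁ ψ₂ : CMap X) : CMap X where
  toFun x := max (ψ₁.toFun x) (ψ₂.toFun x)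
  continuous' := ψ₁.continuous'.max ψ₂.continuous'
  antitone' := fun _ _ h => max_le_max (ψ₁.antitone' h) (ψ₂.antitone' h)

/-- Truncated subtraction in `[0,1]`. -/
noncomputable def tsubI (a u : I) : I :=
  ⟨max ((a : ℝ) - u) 0, ⟨le_max_right _ _,
    max_le (by linarith [a.2.2, u.2.1]) zero_le_one⟩⟩

/-- Pointwise truncated subtraction `ψ ⊖ u`. -/
noncomputable def tsub (ψ : CMap X) (u : I) : CMap X where
  toFun x := tsubI (ψ.toFun x) u
  continuous' := by
    apply Continuous.subtype_mk
    exact ((continuous_subtype_val.comp ψ.continuous').sub continuous_const).max continuous_const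
  antitone' := fun a b h =>
    Subtype.mk_le_mk.mpr
      (max_le_max (sub_le_sub_right (Subtype.coe_le_coe.2 (ψ.antitone' h)) _) le_rfl)

end CMap


section Conditions

variable {X : Type*} [TopologicalSpace X] [Preorder X]

/-- `(Mon)`: `Φ` is monotone. -/
def Mon (Φ : CMap X → I) : Prop :=
  ∀ ψ₁ ψ₂ : CMap X, (∀ x, ψ₁.toFun x ≤ ψ₂.toFun x) → Φ ψ₁ ≤ Φ ψ₂

/-- `(Act)`: `Φ(u ⊗ ψ) = u ⊗ Φ(ψ)`. -/
def Act (T : ContinuousTNorm) (Φ : CMap X → I) : Prop :=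
  ∀ (u : I) (ψ : CMap X), Φ (CMap.smul T u ψ) = T.mul u (Φ ψ)

/-- `(Sup)`: `Φ(ψ₁ ∨ ψ₂) = Φ(ψ₁) ∨ Φ(ψ₂)`. -/
def SupC (Φ : CMap X → I) : Prop :=
  ∀ ψ₁ ψ₂ : CMap X, Φ (ψ₁.sup ψ₂) = max (Φ ψ₁) (Φ ψ₂)

/-- `(Ten)lax`: `Φ(ψ₁ ⊗ ψ₂) ≤ Φ(ψ₁) ⊗ Φ(ψ₂)`. -/
def TenLax (T : ContinuousTNorm) (Φ : CMap X → I) : Prop :=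
  ∀ ψ₁ ψ₂ : CMap X, Φ (CMap.tens T ψ₁ ψ₂) ≤ T.mul (Φ ψ₁) (Φ ψ₂)

/-- `(Ten)`: `Φ(ψ₁ ⊗ ψ₂) = Φ(ψ₁) ⊗ Φ(ψ₂)`. -/
def TenC (T : ContinuousTNorm) (Φ : CMap X → I) : Prop :=
  ∀ ψ₁ ψ₂ : CMap X, Φ (CMap.tens T ψ₁ ψ₂) = T.mul (Φ ψ₁) (Φ ψ₂)

/-- `(Top)`: `Φ(1) = 1`. -/
def TopC (Φ : CMap X → I) : Prop := Φ CMap.one = 1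

/-- `(Min)`: `Φ(ψ ⊖ u) = Φ(ψ) ⊖ u`. -/
noncomputable def MinC (Φ : CMap X → I) : Prop :=
  ∀ (u : I) (ψ : CMap X), Φ (ψ.tsub u) = CMap.tsubI (Φ ψ) u

/-- Condition `(A)`. -/
def CondA (Φ : CMap X → I) : Prop :=
  ∀ (x : X) (ψ : CMap X), Φ ψ = 0 → 0 < ψ.toFun x →
    ∃ ψ' : CMap X, ψ'.toFun x = 1 ∧ Φ ψ' = 0

/-- `Zero(Φ) = ⋂ {Zero ψ | Φ ψ = 0}`. -/
def ZeroPhi (Φ : CMap X → I) : Set X := {x | ∀ ψ : CMap X, Φ ψ = 0 → ψ.toFun x = 0}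

/-- `Anti(Φ)`. -/
def AntiPhi (Φ : CMap X → I) : Set X := {x | ∀ ψ : CMap X, ψ.toFun x ≤ Φ ψ}

/-- `Φ_A(ψ) = sup_{x ∈ A} ψ(x)`, with `Φ_∅ = 0`. -/
noncomputable def PhiA (A : Set X) (ψ : CMap X) : I :=
  ⟨sSup ((fun x => (ψ.toFun x : ℝ)) '' A),
   ⟨Real.sSup_nonneg (by rintro r ⟨x, _, rfl⟩; exact (ψ.toFun x).2.1),
    Real.sSup_le (by rintro r ⟨x, _, rfl⟩; exact (ψ.toFun x).2.2) zero_le_one⟩⟩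

end Conditions



section AuxTNorm

theorem ContinuousTNorm.mul_one (T : ContinuousTNorm) (x : I) : T.mul x 1 = x := by
  rw [T.comm]; exact T.one_mul' x

theorem ContinuousTNorm.mul_zero (T : ContinuousTNorm) (x : I) : T.mul x 0 = 0 := by
  refine le_antisymm ?_ nonneg'
  have h := T.mono (le_one' : x ≤ 1) (le_refl (0 : I))
  rwa [T.one_mul'] at h

theorem ContinuousTNorm.zero_mul (T : ContinuousTNorm) (x : I) : T.mul 0 x = 0 := by
  rw [T.comm]; exact T.mul_zero x

end AuxTNorm

section AuxOrderTop

open Filter Topology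

theorem t2_of_closed_le {X : Type*} [TopologicalSpace X] [PartialOrder X]
    (hle : IsClosed {p : X × X | p.1 ≤ p.2}) : T2Space X := by
  rw [t2_iff_isClosed_diagonal]
  have h2 : IsClosed {p : X × X | p.2 ≤ p.1} := hle.preimage continuous_swap
  have hdiag : (Set.diagonal X) = {p : X × X | p.1 ≤ p.2} ∩ {p : X × X | p.2 ≤ p.1} := by
    ext p
    simp only [Set.mem_diagonal_iff, Set.mem_inter_iff, Set.mem_setOf_eq]
    exact le_antisymm_iff
  rw [hdiag]
  exact hle.inter h2

theorem isClosed_lowerCl {X : Type*} [TopologicalSpace X] [Preorder X] [CompactSpace X]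
    [T2Space X] (hle : IsClosed {p : X × X | p.1 ≤ p.2}) {s : Set X} (hs : IsClosed s) :
    IsClosed {x | ∃ y ∈ s, x ≤ y} := by
  have hK : IsCompact ({p : X × X | p.1 ≤ p.2} ∩ Set.univ ×ˢ s) :=
    (hle.inter (isClosed_univ.prod hs)).isCompact
  have himg : {x | ∃ y ∈ s, x ≤ y} =
      Prod.fst '' ({p : X × X | p.1 ≤ p.2} ∩ Set.univ ×ˢ s) := by
    ext x
    constructor
    · rintro ⟨y, hy, hxy⟩
      exact ⟨(x, y), ⟨hxy, ⟨trivial, hy⟩⟩, rfl⟩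
    · rintro ⟨⟨a, b⟩, ⟨hab, ⟨-, hb⟩⟩, rfl⟩
      exact ⟨b, hb, hab⟩
  rw [himg]
  exact (hK.image continuous_fst).isClosed

theorem isClosed_upperCl {X : Type*} [TopologicalSpace X] [Preorder X] [CompactSpace X]
    [T2Space X] (hle : IsClosed {p : X × X | p.1 ≤ p.2}) {s : Set X} (hs : IsClosed s) :
    IsClosed {x | ∃ y ∈ s, y ≤ x} := by
  have hK : IsCompact ({p : X × X | p.1 ≤ p.2} ∩ s ×ˢ Set.univ) :=
    (hle.inter (hs.prod isClosed_univ)).isCompact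
  have himg : {x | ∃ y ∈ s, y ≤ x} =
      Prod.snd '' ({p : X × X | p.1 ≤ p.2} ∩ s ×ˢ Set.univ) := by
    ext x
    constructor
    · rintro ⟨y, hy, hxy⟩
      exact ⟨(y, x), ⟨hxy, ⟨hy, trivial⟩⟩, rfl⟩
    · rintro ⟨⟨a, b⟩, ⟨hab, ⟨ha, -⟩⟩, rfl⟩
      exact ⟨a, ha, hab⟩
  rw [himg]
  exact (hK.image continuous_snd).isClosed

/-- Sandwich step for the monotone Urysohn construction. -/
theorem exists_lower_sandwich {X : Type*} [TopologicalSpace X] [Preorder X] [CompactSpace X]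
    [T2Space X] (hle : IsClosed {p : X × X | p.1 ≤ p.2}) {c u : Set X}
    (hc : IsClosed c) (hcl : IsLowerSet c) (hu : IsOpen u) (hul : IsLowerSet u) (hcu : c ⊆ u) :
    ∃ v d : Set X, IsOpen v ∧ IsLowerSet v ∧ c ⊆ v ∧ IsClosed d ∧ IsLowerSet d ∧
      closure v ⊆ d ∧ d ⊆ u := by
  have hge : IsClosed {p : X × X | p.2 ≤ p.1} := hle.preimage continuous_swap
  have hsub : c ×ˢ uᶜ ⊆ {p : X × X | p.2 ≤ p.1}ᶜ := by
    rintro ⟨x, y⟩ ⟨hx, hy⟩ h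
    exact hy (hcu (hcl h hx))
  obtain ⟨M, N, hM, hN, hcM, hBN, hMN⟩ :=
    generalized_tube_lemma hc.isCompact (hu.isClosed_compl.isCompact) hge.isOpen_compl hsub
  set Uc := {x | ∃ z ∈ Mᶜ, z ≤ x} with hUcdef
  set Wc := {x | ∃ z ∈ Nᶜ, x ≤ z} with hWcdef
  have hUc_closed : IsClosed Uc := isClosed_upperCl hle hM.isClosed_compl
  have hWc_closed : IsClosed Wc := isClosed_lowerCl hle hN.isClosed_compl
  have hUc_upper : IsUpperSet Uc := by
    rintro a b hab ⟨z, hz, hza⟩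
    exact ⟨z, hz, hza.trans hab⟩
  have hWc_lower : IsLowerSet Wc := by
    rintro a b hba ⟨z, hz, haz⟩
    exact ⟨z, hz, hba.trans haz⟩
  set v := Ucᶜ with hvdef
  set w := Wcᶜ with hwdef
  have hvM : v ⊆ M := by
    intro x hx
    by_contra hxM
    exact hx ⟨x, hxM, le_rfl⟩
  have hwN : w ⊆ N := by
    intro x hx
    by_contra hxN
    exact hx ⟨x, hxN, le_rfl⟩
  have hvw : v ∩ w = ∅ := by
    ext x
    simp only [Set.mem_inter_iff, Set.mem_empty_iff_false, iff_false, not_and]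
    intro hxv hxw
    exact hMN (Set.mk_mem_prod (hvM hxv) (hwN hxw)) le_rfl
  have hw_upper : IsUpperSet w := hWc_lower.compl
  have hucw : uᶜ ⊆ w := by
    intro y hy
    rintro ⟨z, hz, hyz⟩
    exact hz (hBN (hul.compl hyz hy))
  refine ⟨v, {x | ∃ y ∈ closure v, x ≤ y}, hUc_closed.isOpen_compl, hUc_upper.compl, ?_, 
    isClosed_lowerCl hle isClosed_closure, ?_, ?_, ?_⟩
  · intro x hx
    rintro ⟨z, hz, hzx⟩
    exact hz (hcM (hcl hzx hx))
  · rintro a b hba ⟨y, hy, hay⟩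
    exact ⟨y, hy, hba.trans hay⟩
  · intro x hx
    exact ⟨x, hx, le_rfl⟩
  · rintro x ⟨y, hy, hxy⟩
    by_contra hxu
    have hclv : closure v ⊆ Wc := by
      have : v ⊆ Wc := by
        intro z hz
        by_contra hzw
        have : z ∈ v ∩ w := ⟨hz, hzw⟩
        rw [hvw] at this
        exact this
      exact closure_minimal this hWc_closed
    have hyw : y ∈ w := hw_upper hxy (hucw hxu)
    exact hyw (hclv hy)

end AuxOrderTop

/-! ### A monotone version of Urysohn's lemma, following `Mathlib.Topology.UrysohnsLemma`. -/

namespace OCU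

open Filter Topology Set

variable {X : Type*} [TopologicalSpace X] [Preorder X]

structure _root_.OCU (X : Type*) [TopologicalSpace X] [Preorder X] where
  protected C : Set X
  protected U : Set X
  protected closed_C : IsClosed C
  protected lower_C : IsLowerSet C
  protected open_U : IsOpen U
  protected lower_U : IsLowerSet U
  protected subset : C ⊆ U
  protected hP : ∀ {c u : Set X}, IsClosed c → IsLowerSet c → IsOpen u → IsLowerSet u → c ⊆ u →
    ∃ v d : Set X, IsOpen v ∧ IsLowerSet v ∧ c ⊆ v ∧ IsClosed d ∧ IsLowerSet d ∧
      closure v ⊆ d ∧ d ⊆ u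

protected def spec (c : OCU X) :=
  c.hP c.closed_C c.lower_C c.open_U c.lower_U c.subset

noncomputable def left (c : OCU X) : OCU X where
  C := c.C
  U := c.spec.choose
  closed_C := c.closed_C
  lower_C := c.lower_C
  open_U := c.spec.choose_spec.choose_spec.1
  lower_U := c.spec.choose_spec.choose_spec.2.1
  subset := c.spec.choose_spec.choose_spec.2.2.1
  hP := c.hP

noncomputable def right (c : OCU X) : OCU X where
  C := c.spec.choose_spec.choose
  U := c.U
  closed_C := c.spec.choose_spec.choose_spec.2.2.2.1
  lower_C := c.spec.choose_spec.choose_spec.2.2.2.2.1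
  open_U := c.open_U
  lower_U := c.lower_U
  subset := c.spec.choose_spec.choose_spec.2.2.2.2.2.2
  hP := c.hP

theorem left_U_subset_right_C (c : OCU X) : c.left.U ⊆ c.right.C :=
  subset_closure.trans c.spec.choose_spec.choose_spec.2.2.2.2.2.1

theorem left_U_subset (c : OCU X) : c.left.U ⊆ c.U :=
  c.left_U_subset_right_C.trans c.right.subset

theorem subset_right_C (c : OCU X) : c.C ⊆ c.right.C :=
  c.left.subset.trans c.left_U_subset_right_C

noncomputable def approx : ℕ → OCU X → X → ℝ
  | 0, c, x => indicator c.Uᶜ 1 x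
  | n + 1, c, x => midpoint ℝ (approx n c.left x) (approx n c.right x)

theorem approx_of_mem_C (c : OCU X) (n : ℕ) {x : X} (hx : x ∈ c.C) : c.approx n x = 0 := by
  induction n generalizing c with
  | zero => exact indicator_of_notMem (fun (hU : x ∈ c.Uᶜ) => hU <| c.subset hx) _
  | succ n ihn =>
    simp only [approx]
    rw [ihn, ihn, midpoint_self]
    exacts [c.subset_right_C hx, hx]

theorem approx_of_nmem_U (c : OCU X) (n : ℕ) {x : X} (hx : x ∉ c.U) : c.approx n x = 1 := by
  induction n generalizing c with
  | zero =>
    rw [← Set.mem_compl_iff] at hx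
    exact indicator_of_mem hx _
  | succ n ihn =>
    simp only [approx]
    rw [ihn, ihn, midpoint_self]
    exacts [hx, fun hU => hx <| c.left_U_subset hU]

theorem approx_nonneg (c : OCU X) (n : ℕ) (x : X) : 0 ≤ c.approx n x := by
  induction n generalizing c with
  | zero => exact indicator_nonneg (fun _ _ => zero_le_one) _
  | succ n ihn =>
    simp only [approx, midpoint_eq_smul_add, invOf_eq_inv]
    refine mul_nonneg (inv_nonneg.2 zero_le_two) (add_nonneg ?_ ?_) <;> apply ihn

theorem approx_le_one (c : OCU X) (n : ℕ) (x : X) : c.approx n x ≤ 1 := by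
  induction n generalizing c with
  | zero => exact indicator_apply_le' (fun _ => le_rfl) fun _ => zero_le_one
  | succ n ihn =>
    simp only [approx, midpoint_eq_smul_add, invOf_eq_inv, smul_eq_mul, ← div_eq_inv_mul]
    have := add_le_add (ihn (left c)) (ihn (right c))
    norm_num at this
    exact Iff.mpr (div_le_one zero_lt_two) this

theorem bddAbove_range_approx (c : OCU X) (x : X) : BddAbove (range fun n => c.approx n x) :=
  ⟨1, fun _ ⟨n, hn⟩ => hn ▸ c.approx_le_one n x⟩

theorem approx_le_approx_of_U_sub_C {c₁ c₂ : OCU X} (h : c₁.U ⊆ c₂.C) (n₁ n₂ : ℕ) (x : X) :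
    c₂.approx n₂ x ≤ c₁.approx n₁ x := by
  by_cases hx : x ∈ c₁.U
  · calc
      approx n₂ c₂ x = 0 := approx_of_mem_C _ _ (h hx)
      _ ≤ approx n₁ c₁ x := approx_nonneg _ _ _
  · calc
      approx n₂ c₂ x ≤ 1 := approx_le_one _ _ _
      _ = approx n₁ c₁ x := (approx_of_nmem_U _ _ hx).symm

theorem approx_mem_Icc_right_left (c : OCU X) (n : ℕ) (x : X) :
    c.approx n x ∈ Icc (c.right.approx n x) (c.left.approx n x) := by
  induction' n with n ihn generalizing c
  · exact ⟨le_rfl, indicator_le_indicator_of_subset (compl_subset_compl.2 c.left_U_subset)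
      (fun _ => zero_le_one) _⟩
  · simp only [approx, mem_Icc]
    refine ⟨midpoint_le_midpoint ?_ (ihn _).1, midpoint_le_midpoint (ihn _).2 ?_⟩ <;>
      apply approx_le_approx_of_U_sub_C
    exacts [left_U_subset_right_C _, left_U_subset_right_C _]

theorem right_U (c : OCU X) : c.right.U = c.U := rfl

theorem approx_le_succ (c : OCU X) (n : ℕ) (x : X) : c.approx n x ≤ c.approx (n + 1) x := by
  induction' n with n ihn generalizing c
  · simp only [approx, right_U, right_le_midpoint]
    exact (approx_mem_Icc_right_left c 0 x).2
  · rw [approx, approx]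
    exact midpoint_le_midpoint (ihn _) (ihn _)

theorem approx_mono (c : OCU X) (x : X) : Monotone fun n => c.approx n x :=
  monotone_nat_of_le_succ fun n => c.approx_le_succ n x

theorem monotone_approx (c : OCU X) (n : ℕ) : Monotone (c.approx n) := by
  induction n generalizing c with
  | zero =>
    intro x y hxy
    simp only [approx]
    by_cases hy : y ∈ c.U
    · have hx : x ∈ c.U := c.lower_U hxy hy
      rw [indicator_of_notMem (Set.notMem_compl_iff.2 hx), indicator_of_notMem (Set.notMem_compl_iff.2 hy)]
    · have h1 : indicator c.Uᶜ (1 : X → ℝ) y = 1 := indicator_of_mem (Set.mem_compl hy) _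
      rw [h1]
      exact indicator_apply_le' (fun _ => le_rfl) fun _ => zero_le_one
  | succ n ihn =>
    intro x y hxy
    exact midpoint_le_midpoint (ihn c.left hxy) (ihn c.right hxy)

protected noncomputable def lim (c : OCU X) (x : X) : ℝ :=
  ⨆ n, c.approx n x

theorem tendsto_approx_atTop (c : OCU X) (x : X) :
    Tendsto (fun n => c.approx n x) atTop (𝓝 <| c.lim x) :=
  tendsto_atTop_ciSup (c.approx_mono x) ⟨1, fun _ ⟨_, hn⟩ => hn ▸ c.approx_le_one _ _⟩

theorem lim_of_mem_C (c : OCU X) (x : X) (h : x ∈ c.C) : c.lim x = 0 := by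
  simp only [OCU.lim, approx_of_mem_C, h, ciSup_const]

theorem lim_of_nmem_U (c : OCU X) (x : X) (h : x ∉ c.U) : c.lim x = 1 := by
  simp only [OCU.lim, approx_of_nmem_U c _ h, ciSup_const]

theorem lim_eq_midpoint (c : OCU X) (x : X) :
    c.lim x = midpoint ℝ (c.left.lim x) (c.right.lim x) := by
  refine tendsto_nhds_unique (c.tendsto_approx_atTop x) ((tendsto_add_atTop_iff_nat 1).1 ?_)
  simp only [approx]
  exact (c.left.tendsto_approx_atTop x).midpoint (c.right.tendsto_approx_atTop x)

theorem approx_le_lim (c : OCU X) (x : X) (n : ℕ) : c.approx n x ≤ c.lim x :=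
  le_ciSup (c.bddAbove_range_approx x) _

theorem lim_nonneg (c : OCU X) (x : X) : 0 ≤ c.lim x :=
  (c.approx_nonneg 0 x).trans (c.approx_le_lim x 0)

theorem lim_le_one (c : OCU X) (x : X) : c.lim x ≤ 1 :=
  ciSup_le fun _ => c.approx_le_one _ _

theorem lim_mem_Icc (c : OCU X) (x : X) : c.lim x ∈ Icc (0 : ℝ) 1 :=
  ⟨c.lim_nonneg x, c.lim_le_one x⟩

theorem monotone_lim (c : OCU X) : Monotone c.lim := fun x y hxy =>
  ciSup_mono (c.bddAbove_range_approx y) fun n => c.monotone_approx n hxy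

theorem continuous_lim (c : OCU X) : Continuous c.lim := by
  obtain ⟨h0, h1234, h1⟩ : 0 < (2⁻¹ : ℝ) ∧ (2⁻¹ : ℝ) < 3 / 4 ∧ (3 / 4 : ℝ) < 1 := by norm_num
  refine
    continuous_iff_continuousAt.2 fun x =>
      (Metric.nhds_basis_closedBall_pow (h0.trans h1234) h1).tendsto_right_iff.2 fun n _ => ?_
  simp only [Metric.mem_closedBall]
  induction' n with n ihn generalizing c
  · filter_upwards with y
    rw [pow_zero]
    exact Real.dist_le_of_mem_Icc_01 (c.lim_mem_Icc _) (c.lim_mem_Icc _)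
  · by_cases hxl : x ∈ c.left.U
    · filter_upwards [IsOpen.mem_nhds c.left.open_U hxl, ihn c.left] with _ hyl hyd
      rw [pow_succ', c.lim_eq_midpoint, c.lim_eq_midpoint,
        c.right.lim_of_mem_C _ (c.left_U_subset_right_C hyl),
        c.right.lim_of_mem_C _ (c.left_U_subset_right_C hxl)]
      refine (dist_midpoint_midpoint_le _ _ _ _).trans ?_
      rw [dist_self, add_zero, div_eq_inv_mul]
      gcongr
    · replace hxl : x ∈ c.left.right.Cᶜ :=
        compl_subset_compl.2 c.left.right.subset hxl
      filter_upwards [IsOpen.mem_nhds (isOpen_compl_iff.2 c.left.right.closed_C) hxl,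
        ihn c.left.right, ihn c.right] with y hyl hydl hydr
      replace hxl : x ∉ c.left.left.U :=
        compl_subset_compl.2 c.left.left_U_subset_right_C hxl
      replace hyl : y ∉ c.left.left.U :=
        compl_subset_compl.2 c.left.left_U_subset_right_C hyl
      simp only [pow_succ, c.lim_eq_midpoint, c.left.lim_eq_midpoint,
        c.left.left.lim_of_nmem_U _ hxl, c.left.left.lim_of_nmem_U _ hyl]
      refine (dist_midpoint_midpoint_le _ _ _ _).trans ?_
      refine (div_le_div_of_nonneg_right (add_le_add_left (dist_midpoint_midpoint_le _ _ _ _) _)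
        zero_le_two).trans ?_
      rw [dist_self, zero_add]
      set r := (3 / 4 : ℝ) ^ n
      calc _ ≤ (r / 2 + r) / 2 := by gcongr
        _ = _ := by field_simp; ring

end OCU

section AuxSep

/-- Monotone Urysohn separation: an antitone `[0,1]`-valued continuous map that is `1`
on a closed lower set and `0` on a disjoint closed upper set. -/
theorem exists_antitone_sep {X : Type*} [TopologicalSpace X] [CompactSpace X] [PartialOrder X]
    (hle : IsClosed {p : X × X | p.1 ≤ p.2}) {D U : Set X}
    (hD : IsClosed D) (hDl : IsLowerSet D) (hU : IsClosed U) (hUu : IsUpperSet U)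
    (hd : Disjoint D U) :
    ∃ ψ : CMap X, (∀ x ∈ D, ψ.toFun x = 1) ∧ ∀ x ∈ U, ψ.toFun x = 0 := by
  haveI := t2_of_closed_le hle
  set c : OCU X :=
    { C := D
      U := Uᶜ
      closed_C := hD
      lower_C := hDl
      open_U := hU.isOpen_compl
      lower_U := hUu.compl
      subset := fun x hx => Set.disjoint_left.1 hd hx
      hP := fun hc hcl hu hul hcu => exists_lower_sandwich hle hc hcl hu hul hcu } with hc
  refine ⟨⟨fun x => ⟨1 - c.lim x, ?_, ?_⟩, ?_, ?_⟩, ?_, ?_⟩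
  · have := (c.lim_mem_Icc x).2; linarith
  · have := (c.lim_mem_Icc x).1; linarith
  · exact Continuous.subtype_mk (continuous_const.sub c.continuous_lim) _
  · intro x y hxy
    exact Subtype.mk_le_mk.2 (by have := c.monotone_lim hxy; linarith)
  · intro x hx
    exact Subtype.ext (by simp [c.lim_of_mem_C x hx])
  · intro x hx
    exact Subtype.ext (by simp [c.lim_of_nmem_U x (fun h => h hx)])

end AuxSep

section AuxPhiA

variable {X : Type*} [TopologicalSpace X] [Preorder X]

theorem le_phiA {A : Set X} {ψ : CMap X} {x : X} (hx : x ∈ A) : ψ.toFun x ≤ PhiA A ψ := by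
  rw [← Subtype.coe_le_coe]
  exact le_csSup ⟨1, by rintro r ⟨y, -, rfl⟩; exact (ψ.toFun y).2.2⟩ ⟨x, hx, rfl⟩

theorem phiA_le {A : Set X} {ψ : CMap X} {u : I} (h : ∀ x ∈ A, ψ.toFun x ≤ u) :
    PhiA A ψ ≤ u := by
  rw [← Subtype.coe_le_coe]
  refine Real.sSup_le ?_ u.2.1
  rintro r ⟨x, hx, rfl⟩
  exact Subtype.coe_le_coe.2 (h x hx)

theorem phiA_empty (ψ : CMap X) : PhiA (∅ : Set X) ψ = 0 :=
  Subtype.ext (by simp [PhiA, Real.sSup_empty])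

end AuxPhiA

/-- For a closed upper subset `A` of a partially ordered compact space:
`A` is nonempty iff `Φ_A(1) = 1`, and `A` is irreducible iff `Φ_A` preserves `⊗`. -/
theorem phiA_top_and_tensor_characterisation (T : ContinuousTNorm) {X : Type*} [TopologicalSpace X] [CompactSpace X]
    [PartialOrder X] (hle : IsClosed {p : X × X | p.1 ≤ p.2})
    (A : Set X) (hA : IsClosed A) (hAu : IsUpperSet A) :
    (A.Nonempty ↔ PhiA A CMap.one = 1) ∧
    ((∀ A₁ A₂ : Set X, IsClosed A₁ → IsUpperSet A₁ → IsClosed A₂ → IsUpperSet A₂ →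
        A₁ ∪ A₂ = A → A = A₁ ∨ A = A₂) ↔
      ∀ ψ₁ ψ₂ : CMap X, PhiA A (CMap.tens T ψ₁ ψ₂) = T.mul (PhiA A ψ₁) (PhiA A ψ₂)) := by
  haveI := t2_of_closed_le hle
  constructor
  · constructor
    · rintro ⟨a, ha⟩
      exact le_antisymm le_one' (le_phiA (ψ := CMap.one) ha)
    · intro h
      by_contra hne
      rw [Set.not_nonempty_iff_eq_empty] at hne
      rw [hne, phiA_empty] at h
      have : (0 : ℝ) = 1 := congrArg Subtype.val h
      norm_num at this
  · constructor
    · -- irreducible implies (Ten)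
      intro hirr ψ₁ ψ₂
      refine le_antisymm (phiA_le fun x hx => T.mono (le_phiA hx) (le_phiA hx)) ?_
      rcases eq_or_lt_of_le (nonneg' : (0:I) ≤ PhiA A ψ₁) with hu0 | hu0
      · rw [← hu0, T.zero_mul]; exact nonneg'
      rcases eq_or_lt_of_le (nonneg' : (0:I) ≤ PhiA A ψ₂) with hv0 | hv0
      · rw [← hv0, T.mul_zero]; exact nonneg'
      refine le_of_forall_lt fun t ht => ?_
      -- pick `u' < Φψ₁`, `v' < Φψ₂` with `t < u' ⊗ v'`, by continuity of the t-norm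
      obtain ⟨u', v', hu', hv', htuv⟩ : ∃ u' v' : I, u' < PhiA A ψ₁ ∧ v' < PhiA A ψ₂ ∧
          t < T.mul u' v' := by
        set a := PhiA A ψ₁
        set b := PhiA A ψ₂
        have seqmem : ∀ (p : I) (n : ℕ), (p : ℝ) * (1 - 1 / (n + 1)) ∈ Set.Icc (0:ℝ) 1 := by
          intro p n
          have h1 : (0:ℝ) < 1 / (n + 1) := by positivity
          have h2 : (1:ℝ) / (n + 1) ≤ 1 := by
            rw [div_le_one (by positivity)]
            linarith [Nat.cast_nonneg (α := ℝ) n]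
          constructor
          · nlinarith [p.2.1]
          · nlinarith [p.2.1, p.2.2]
        set f : I → ℕ → I := fun p n => ⟨(p : ℝ) * (1 - 1 / (n + 1)), seqmem p n⟩ with hf
        have htend : ∀ p : I, Filter.Tendsto (fun n => f p n) Filter.atTop (nhds p) := by
          intro p
          rw [tendsto_subtype_rng]
          have : Filter.Tendsto (fun n : ℕ => (p : ℝ) * (1 - 1 / (n + 1)))
              Filter.atTop (nhds ((p : ℝ) * (1 - 0))) :=
            Filter.Tendsto.mul tendsto_const_nhds
              (Filter.Tendsto.sub tendsto_const_nhds tendsto_one_div_add_atTop_nhds_zero_nat)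
          simpa [hf] using this
        have hmul : Filter.Tendsto (fun n => ((T.mul (f a n) (f b n) : I) : ℝ))
            Filter.atTop (nhds ((T.mul a b : I) : ℝ)) := by
          have h1 : Filter.Tendsto (fun n => ((f a n, f b n) : I × I)) Filter.atTop
              (nhds (a, b)) := ((htend a).prodMk_nhds (htend b))
          exact (continuous_subtype_val.tendsto _).comp ((T.continuous.tendsto (a, b)).comp h1)
        have hlt : ((t : I) : ℝ) < ((T.mul a b : I) : ℝ) := Subtype.coe_lt_coe.2 ht
        obtain ⟨n, hn⟩ := (hmul.eventually_const_lt hlt).exists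
        have hfa : f a n < a := by
          rw [← Subtype.coe_lt_coe]
          have h1 : (0:ℝ) < 1 / (n + 1) := by positivity
          have ha0 : (0:ℝ) < a := Subtype.coe_lt_coe.2 hu0
          show (a : ℝ) * (1 - 1 / (n + 1)) < a
          nlinarith
        have hfb : f b n < b := by
          rw [← Subtype.coe_lt_coe]
          have h1 : (0:ℝ) < 1 / (n + 1) := by positivity
          have hb0 : (0:ℝ) < b := Subtype.coe_lt_coe.2 hv0
          show (b : ℝ) * (1 - 1 / (n + 1)) < b
          nlinarith
        exact ⟨f a n, f b n, hfa, hfb, Subtype.coe_lt_coe.1 hn⟩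
      by_cases hcover : A ⊆ (A ∩ {x | ψ₁.toFun x ≤ u'}) ∪ (A ∩ {x | ψ₂.toFun x ≤ v'})
      · exfalso
        have hsub1 : IsClosed {x | ψ₁.toFun x ≤ u'} := by
          have : {x | ψ₁.toFun x ≤ u'} =
              (fun x => ((ψ₁.toFun x : I) : ℝ)) ⁻¹' (Set.Iic (u' : ℝ)) := by
            ext x
            simp [Set.mem_preimage, Set.mem_Iic, ← Subtype.coe_le_coe]
          rw [this]
          exact IsClosed.preimage (continuous_subtype_val.comp ψ₁.continuous') isClosed_Iic
        have hsub2 : IsClosed {x | ψ₂.toFun x ≤ v'} := by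
          have : {x | ψ₂.toFun x ≤ v'} =
              (fun x => ((ψ₂.toFun x : I) : ℝ)) ⁻¹' (Set.Iic (v' : ℝ)) := by
            ext x
            simp [Set.mem_preimage, Set.mem_Iic, ← Subtype.coe_le_coe]
          rw [this]
          exact IsClosed.preimage (continuous_subtype_val.comp ψ₂.continuous') isClosed_Iic
        have hup1 : IsUpperSet (A ∩ {x | ψ₁.toFun x ≤ u'}) := by
          rintro x y hxy ⟨hxA, hx⟩
          exact ⟨hAu hxy hxA, le_trans (ψ₁.antitone' hxy) hx⟩
        have hup2 : IsUpperSet (A ∩ {x | ψ₂.toFun x ≤ v'}) := by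
          rintro x y hxy ⟨hxA, hx⟩
          exact ⟨hAu hxy hxA, le_trans (ψ₂.antitone' hxy) hx⟩
        have heq : (A ∩ {x | ψ₁.toFun x ≤ u'}) ∪ (A ∩ {x | ψ₂.toFun x ≤ v'}) = A :=
          Set.Subset.antisymm
            (Set.union_subset Set.inter_subset_left Set.inter_subset_left) hcover
        rcases hirr _ _ (hA.inter hsub1) hup1 (hA.inter hsub2) hup2 heq with h | h
        · have : PhiA A ψ₁ ≤ u' := phiA_le fun x hx => (h.subset hx).2
          exact absurd this (not_le.2 hu')
        · have : PhiA A ψ₂ ≤ v' := phiA_le fun x hx => (h.subset hx).2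
          exact absurd this (not_le.2 hv')
      · obtain ⟨x, hxA, hxn⟩ := Set.not_subset.1 hcover
        have h1 : u' < ψ₁.toFun x := not_le.1 fun h => hxn (Or.inl ⟨hxA, h⟩)
        have h2 : v' < ψ₂.toFun x := not_le.1 fun h => hxn (Or.inr ⟨hxA, h⟩)
        calc t < T.mul u' v' := htuv
          _ ≤ T.mul (ψ₁.toFun x) (ψ₂.toFun x) := T.mono h1.le h2.le
          _ ≤ PhiA A (CMap.tens T ψ₁ ψ₂) := le_phiA (ψ := CMap.tens T ψ₁ ψ₂) hxA
    · -- (Ten) implies irreducible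
      intro hten A₁ A₂ h₁c h₁u h₂c h₂u hun
      by_cases h₁ : A ⊆ A₁
      · exact Or.inl (Set.Subset.antisymm h₁ (hun ▸ Set.subset_union_left))
      by_cases h₂ : A ⊆ A₂
      · exact Or.inr (Set.Subset.antisymm h₂ (hun ▸ Set.subset_union_right))
      exfalso
      obtain ⟨a, haA, ha1⟩ := Set.not_subset.1 h₁
      obtain ⟨b, hbA, hb2⟩ := Set.not_subset.1 h₂
      have hDa : IsClosed {x | ∃ y ∈ ({a} : Set X), x ≤ y} :=
        isClosed_lowerCl hle isClosed_singleton
      have hDb : IsClosed {x | ∃ y ∈ ({b} : Set X), x ≤ y} :=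
        isClosed_lowerCl hle isClosed_singleton
      have hla : IsLowerSet {x | ∃ y ∈ ({a} : Set X), x ≤ y} := by
        rintro p q hqp ⟨y, hy, hpy⟩; exact ⟨y, hy, hqp.trans hpy⟩
      have hlb : IsLowerSet {x | ∃ y ∈ ({b} : Set X), x ≤ y} := by
        rintro p q hqp ⟨y, hy, hpy⟩; exact ⟨y, hy, hqp.trans hpy⟩
      have hda : Disjoint {x | ∃ y ∈ ({a} : Set X), x ≤ y} A₁ := by
        rw [Set.disjoint_left]
        rintro z ⟨y, hy, hzy⟩ hz
        rw [Set.mem_singleton_iff] at hy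
        subst hy
        exact ha1 (h₁u hzy hz)
      have hdb : Disjoint {x | ∃ y ∈ ({b} : Set X), x ≤ y} A₂ := by
        rw [Set.disjoint_left]
        rintro z ⟨y, hy, hzy⟩ hz
        rw [Set.mem_singleton_iff] at hy
        subst hy
        exact hb2 (h₂u hzy hz)
      obtain ⟨ψ₁, hψ₁D, hψ₁U⟩ := exists_antitone_sep hle hDa hla h₁c h₁u hda
      obtain ⟨ψ₂, hψ₂D, hψ₂U⟩ := exists_antitone_sep hle hDb hlb h₂c h₂u hdb
      have hone1 : PhiA A ψ₁ = 1 := by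
        refine le_antisymm le_one' ?_
        have := le_phiA (ψ := ψ₁) haA
        rwa [hψ₁D a ⟨a, rfl, le_rfl⟩] at this
      have hone2 : PhiA A ψ₂ = 1 := by
        refine le_antisymm le_one' ?_
        have := le_phiA (ψ := ψ₂) hbA
        rwa [hψ₂D b ⟨b, rfl, le_rfl⟩] at this
      have hzero : PhiA A (CMap.tens T ψ₁ ψ₂) = 0 := by
        refine le_antisymm (phiA_le fun x hx => ?_) nonneg'
        have hx' : x ∈ A₁ ∪ A₂ := hun.symm ▸ hx
        show T.mul (ψ₁.toFun x) (ψ₂.toFun x) ≤ 0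
        rcases hx' with hx1 | hx2
        · rw [hψ₁U x hx1, T.zero_mul]
        · rw [hψ₂U x hx2, T.mul_zero]
      have := hten ψ₁ ψ₂
      rw [hzero, hone1, hone2, T.one_mul'] at this
      have h01 : (0 : ℝ) = 1 := congrArg Subtype.val this
      norm_num at h01
end

section
/- Let ⊗ be a continuous t-norm on [0,1], let X be a partially ordered compact space, and let Φ : CX → [0,1] be a map. Then: (1) if Φ satisfies (Mon), (Act) and (Ten)lax, then Φ satisfies condition (A); (2) if ⊗ has no nilpotent elements and Φ satisfies (Mon) and (Act), then Φ satisfies condition (A). -/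
open unitInterval Set

open Filter Topology

namespace ContinuousTNorm

variable (T : ContinuousTNorm)

lemma mul_le_right (x y : I) : T.mul x y ≤ y := by
  have := T.mono (le_one' : x ≤ 1) (le_refl y)
  rwa [T.one_mul'] at this

lemma mul_le_left (x y : I) : T.mul x y ≤ x := by
  rw [T.comm]; exact T.mul_le_right y x

lemma mul_one' (x : I) : T.mul x 1 = x := by rw [T.comm]; exact T.one_mul' x

lemma eq_zero_of_le_zero {x : I} (h : x ≤ 0) : x = 0 := le_antisymm h nonneg'

lemma pow_one' (x : I) : T.pow x 1 = x := by
  show T.mul x (T.pow x 0) = x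
  show T.mul x 1 = x
  exact T.mul_one' x

lemma pow_succ_le (x : I) (n : ℕ) : T.pow x (n + 1) ≤ T.pow x n :=
  T.mul_le_right x (T.pow x n)

lemma pow_antitone (x : I) : Antitone (T.pow x) :=
  antitone_nat_of_succ_le (T.pow_succ_le x)

lemma pow_add' (x : I) (m n : ℕ) : T.pow x (m + n) = T.mul (T.pow x m) (T.pow x n) := by
  induction m with
  | zero => simp only [Nat.zero_add]; exact (T.one_mul' _).symm
  | succ m ih =>
    have : m + 1 + n = (m + n) + 1 := by omega
    rw [this]
    show T.mul x (T.pow x (m + n)) = T.mul (T.mul x (T.pow x m)) (T.pow x n)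
    rw [ih, T.assoc]

lemma mul_eq_self_of_le_idem {e x : I} (he : T.mul e e = e) (hx : x ≤ e) : T.mul x e = x := by
  have hg : Continuous fun t : I => (T.mul t e : ℝ) := by
    exact continuous_subtype_val.comp (T.continuous.comp (continuous_id.prodMk continuous_const))
  have h0 : (T.mul 0 e : ℝ) = 0 := by
    have : T.mul 0 e = 0 := eq_zero_of_le_zero (T.mul_le_left 0 e)
    rw [this]; rfl
  have h1 : (T.mul e e : ℝ) = (e : ℝ) := by rw [he]
  have hmem : (x : ℝ) ∈ Icc ((fun t : I => (T.mul t e : ℝ)) 0) ((fun t : I => (T.mul t e : ℝ)) e) := by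
    simp only [h0, h1]
    exact ⟨x.2.1, hx⟩
  obtain ⟨t, ht⟩ := intermediate_value_univ (0 : I) e hg hmem
  have ht' : T.mul t e = x := Subtype.ext ht
  calc T.mul x e = T.mul (T.mul t e) e := by rw [ht']
    _ = T.mul t (T.mul e e) := T.assoc t e e
    _ = T.mul t e := by rw [he]
    _ = x := ht'

lemma exists_pow_le {v w : I} (hv : 0 < v) (hvw : T.mul v w = 0) : ∃ n, T.pow w n ≤ v := by
  by_contra h
  push_neg at h
  have hle : ∀ n, v ≤ T.pow w n := fun n => (h n).le
  set a : ℕ → ℝ := fun n => (T.pow w n : ℝ) with ha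
  have hanti : Antitone a := fun m n hmn => Subtype.coe_le_coe.2 (T.pow_antitone w hmn)
  have hbdd : BddBelow (range a) := ⟨0, by rintro r ⟨n, rfl⟩; exact (T.pow w n).2.1⟩
  have htend : Tendsto a atTop (𝓝 (⨅ n, a n)) := tendsto_atTop_ciInf hanti hbdd
  set e' : ℝ := ⨅ n, a n with he'
  have hve : (v : ℝ) ≤ e' := le_ciInf fun n => Subtype.coe_le_coe.2 (hle n)
  have he0 : 0 ≤ e' := le_trans v.2.1 hve
  have he1 : e' ≤ 1 := le_trans (ciInf_le hbdd 0) (T.pow w 0).2.2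
  set eI : I := ⟨e', he0, he1⟩ with heI
  have htendI : Tendsto (fun n => T.pow w n) atTop (𝓝 eI) := tendsto_subtype_rng.mpr htend
  have h2n : Tendsto (fun n : ℕ => n + n) atTop atTop :=
    tendsto_atTop_atTop_of_monotone (fun a b h => by omega) (fun b => ⟨b, by omega⟩)
  have htend2 : Tendsto (fun n => T.pow w (n + n)) atTop (𝓝 eI) := htendI.comp h2n
  have hmul : Tendsto (fun n => T.mul (T.pow w n) (T.pow w n)) atTop (𝓝 (T.mul eI eI)) :=
    (T.continuous.tendsto (eI, eI)).comp (htendI.prodMk_nhds htendI)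
  have heq : (fun n => T.pow w (n + n)) = fun n => T.mul (T.pow w n) (T.pow w n) := by
    funext n; exact T.pow_add' w n n
  rw [heq] at htend2
  have hidem : T.mul eI eI = eI := tendsto_nhds_unique hmul htend2
  have hveI : v ≤ eI := Subtype.coe_le_coe.1 hve
  have h1 : T.mul v eI = v := T.mul_eq_self_of_le_idem hidem hveI
  have hew : eI ≤ w := by
    have : e' ≤ a 1 := ciInf_le hbdd 1
    have hw : a 1 = (w : ℝ) := by rw [ha]; simp only [T.pow_one']
    exact Subtype.coe_le_coe.1 (by rw [← hw]; exact this)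
  have : v ≤ (0 : I) := by
    calc v = T.mul v eI := h1.symm
      _ ≤ T.mul v w := T.mono le_rfl hew
      _ = 0 := hvw
  exact absurd (eq_zero_of_le_zero this) (ne_of_gt hv)

end ContinuousTNorm


open Filter Topology in
lemma exists_bar {X : Type*} [TopologicalSpace X] [Preorder X] (T : ContinuousTNorm)
    (Φ : CMap X → I) (hMon : Mon Φ) (hAct : Act T Φ) (x : X) (ψ : CMap X)
    (h0 : Φ ψ = 0) (hx : 0 < ψ.toFun x) :
    ∃ (v : I) (ψb : CMap X), 0 < v ∧ ψb.toFun x = 1 ∧ T.mul v (Φ ψb) = 0 := by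
  set u : I := ψ.toFun x with hu
  have hur : 0 < (u : ℝ) := hx
  set vr : ℝ := (u : ℝ) / 2 with hvr
  set K : ℝ := (1 - (u : ℝ)) / vr with hK
  have hK0 : 0 ≤ K := div_nonneg (by linarith [u.2.2]) (by linarith)
  set f : ℝ → ℝ := fun t => min 1 (t + max 0 (t - vr) * K) with hf
  have hfmono : Monotone f := by
    intro s t hst
    exact min_le_min le_rfl
      (add_le_add hst (mul_le_mul_of_nonneg_right
        (max_le_max le_rfl (sub_le_sub_right hst _)) hK0))
  have hmem : ∀ y : X, f ((ψ.toFun y : ℝ)) ∈ I := by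
    intro y
    constructor
    · apply le_min zero_le_one
      have h1 : 0 ≤ (ψ.toFun y : ℝ) := (ψ.toFun y).2.1
      have h2 : 0 ≤ max 0 ((ψ.toFun y : ℝ) - vr) := le_max_left _ _
      nlinarith
    · exact min_le_left _ _
  set ψb : CMap X :=
    { toFun := fun y => ⟨f ((ψ.toFun y : ℝ)), hmem y⟩
      continuous' := by
        apply Continuous.subtype_mk
        have hc : Continuous fun y : X => (ψ.toFun y : ℝ) :=
          continuous_subtype_val.comp ψ.continuous'
        exact continuous_const.min
          (hc.add (((continuous_const.max (hc.sub continuous_const))).mul continuous_const))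
      antitone' := fun a b h => Subtype.mk_le_mk.mpr
        (hfmono (Subtype.coe_le_coe.2 (ψ.antitone' h))) } with hψb
  have hv1 : vr ≤ 1 := by
    have := u.2.2; linarith
  set vI : I := ⟨vr, by positivity, hv1⟩ with hvI
  have hv : 0 < vI := by
    rw [← Subtype.coe_lt_coe]
    show (0:ℝ) < vr
    positivity
  have hb1 : ψb.toFun x = 1 := by
    apply Subtype.ext
    show f ((u : ℝ)) = 1
    have h1 : (u : ℝ) - vr = vr := by rw [hvr]; ring
    have h2 : max 0 ((u : ℝ) - vr) = vr := by rw [h1]; exact max_eq_right (by positivity)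
    have h3 : vr * K = 1 - (u : ℝ) := by
      rw [hK, mul_div_assoc']; exact mul_div_cancel_left₀ _ (ne_of_gt (by rw [hvr]; linarith))
    show min 1 ((u:ℝ) + max 0 ((u:ℝ) - vr) * K) = 1
    rw [h2, h3]
    simp
  have hpt : ∀ y, T.mul vI (ψb.toFun y) ≤ ψ.toFun y := by
    intro y
    rcases le_or_gt vI (ψ.toFun y) with h | h
    · exact le_trans (T.mul_le_left _ _) h
    · have hyr : (ψ.toFun y : ℝ) < vr := h
      have heq : ψb.toFun y = ψ.toFun y := by
        apply Subtype.ext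
        show f ((ψ.toFun y : ℝ)) = (ψ.toFun y : ℝ)
        have h1 : max 0 ((ψ.toFun y : ℝ) - vr) = 0 := max_eq_left (by linarith)
        show min 1 ((ψ.toFun y : ℝ) + max 0 ((ψ.toFun y : ℝ) - vr) * K) = _
        rw [h1, zero_mul, add_zero]
        exact min_eq_right (ψ.toFun y).2.2
      rw [heq]
      exact T.mul_le_right _ _
  have hΦ : Φ (CMap.smul T vI ψb) ≤ Φ ψ := hMon _ _ hpt
  rw [hAct vI ψb, h0] at hΦ
  exact ⟨vI, ψb, hv, hb1, ContinuousTNorm.eq_zero_of_le_zero hΦ⟩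


/-- `(Mon)`, `(Act)` and `(Ten)lax` imply condition `(A)`; if the t-norm has no nilpotent
elements, `(Mon)` and `(Act)` alone imply condition `(A)`. -/
theorem conditionA_of_mon_act (T : ContinuousTNorm) {X : Type*} [TopologicalSpace X] [CompactSpace X]
    [PartialOrder X] (hle : IsClosed {p : X × X | p.1 ≤ p.2})
    (Φ : CMap X → I) :
    (Mon Φ → Act T Φ → TenLax T Φ → CondA Φ) ∧
    ((∀ v : I, v ≠ 0 → ∀ n : ℕ, T.pow v n ≠ 0) → Mon Φ → Act T Φ → CondA Φ) := by
  constructor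
  · intro hMon hAct hTen x ψ h0 hx
    obtain ⟨v, ψb, hv, hb1, hvw⟩ := exists_bar T Φ hMon hAct x ψ h0 hx
    obtain ⟨n, hn⟩ := T.exists_pow_le hv hvw
    set w : I := Φ ψb with hw
    have hpow0 : T.pow w (n + 1) = 0 := by
      apply ContinuousTNorm.eq_zero_of_le_zero
      calc T.pow w (n + 1) = T.mul w (T.pow w n) := rfl
        _ ≤ T.mul w v := T.mono le_rfl hn
        _ = T.mul v w := T.comm w v
        _ = 0 := hvw
    have claim : ∀ m, ∃ χ : CMap X, χ.toFun x = 1 ∧ Φ χ ≤ T.pow w m := by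
      intro m
      induction m with
      | zero => exact ⟨ψb, hb1, le_one'⟩
      | succ m ih =>
        obtain ⟨χ, hχ1, hχ2⟩ := ih
        refine ⟨CMap.tens T ψb χ, ?_, ?_⟩
        · show T.mul (ψb.toFun x) (χ.toFun x) = 1
          rw [hb1, hχ1]
          exact T.one_mul' 1
        · calc Φ (CMap.tens T ψb χ) ≤ T.mul (Φ ψb) (Φ χ) := hTen ψb χ
            _ ≤ T.mul w (T.pow w m) := T.mono le_rfl hχ2
            _ = T.pow w (m + 1) := rfl
    obtain ⟨χ, h1, h2⟩ := claim (n + 1)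
    exact ⟨χ, h1, ContinuousTNorm.eq_zero_of_le_zero (hpow0 ▸ h2)⟩
  · intro hnil hMon hAct x ψ h0 hx
    obtain ⟨v, ψb, hv, hb1, hvw⟩ := exists_bar T Φ hMon hAct x ψ h0 hx
    refine ⟨ψb, hb1, ?_⟩
    by_contra hwne
    rcases le_total (Φ ψb) v with h | h
    · apply hnil (Φ ψb) hwne 2
      apply ContinuousTNorm.eq_zero_of_le_zero
      calc T.pow (Φ ψb) 2 = T.mul (Φ ψb) (T.pow (Φ ψb) 1) := rfl
        _ = T.mul (Φ ψb) (Φ ψb) := by rw [T.pow_one']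
        _ ≤ T.mul v (Φ ψb) := T.mono h le_rfl
        _ = 0 := hvw
    · apply hnil v hv.ne' 2
      apply ContinuousTNorm.eq_zero_of_le_zero
      calc T.pow v 2 = T.mul v (T.pow v 1) := rfl
        _ = T.mul v v := by rw [T.pow_one']
        _ ≤ T.mul v (Φ ψb) := T.mono le_rfl h
        _ = 0 := hvw
end

section
/- Let ⊗ be a continuous t-norm on [0,1] and X a partially ordered compact space. For every Φ : CX → [0,1] satisfying (Mon), (Act), (Sup) and condition (A), one has Φ(ψ) ≤ sup_{x ∈ Zero(Φ)} ψ(x) for all ψ ∈ CX (where the supremum over the empty set is 0). -/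
open unitInterval Set

open Topology Filter

section Aux

variable {X : Type*} [TopologicalSpace X] [Preorder X]

lemma ContinuousTNorm.mul_le_right'' (T : ContinuousTNorm) (a b : I) : T.mul a b ≤ b := by
  have h := T.mono (le_one' : a ≤ 1) (le_refl b)
  rwa [T.one_mul'] at h

lemma ContinuousTNorm.mul_le_left'' (T : ContinuousTNorm) (a b : I) : T.mul a b ≤ a := by
  rw [T.comm]; exact T.mul_le_right'' b a

lemma phi_foldr_zero (Φ : CMap X → I) (hSup : SupC Φ) (base : CMap X) (hb : Φ base = 0) :
    ∀ l : List (CMap X), (∀ ψ ∈ l, Φ ψ = 0) → Φ (l.foldr CMap.sup base) = 0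
  | [], _ => hb
  | ψ :: l, h => by
    have ih := phi_foldr_zero Φ hSup base hb l (fun ψ' h' => h ψ' (List.mem_cons_of_mem _ h'))
    show Φ (ψ.sup (l.foldr CMap.sup base)) = 0
    rw [hSup, h ψ (List.mem_cons_self), ih, max_self]

lemma le_foldr_sup (base : CMap X) (y : X) :
    ∀ (l : List (CMap X)) (ψ : CMap X), ψ ∈ l → ψ.toFun y ≤ (l.foldr CMap.sup base).toFun y
  | [], ψ, h => absurd h List.not_mem_nil
  | ψ₀ :: l, ψ, h => by
    rcases List.mem_cons.mp h with rfl | h'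
    · exact le_max_left _ _
    · exact le_trans (le_foldr_sup base y l ψ h') (le_max_right _ _)

end Aux

/-- If `Φ : CX → [0,1]` satisfies `(Mon)`, `(Act)`, `(Sup)` and condition `(A)`, then
`Φ(ψ) ≤ sup_{x ∈ Zero(Φ)} ψ(x)` for every `ψ ∈ CX`. -/
theorem phi_le_sup_on_zero (T : ContinuousTNorm) {X : Type*} [TopologicalSpace X] [CompactSpace X]
    [PartialOrder X] (hle : IsClosed {p : X × X | p.1 ≤ p.2})
    (Φ : CMap X → I) (hMon : Mon Φ) (hAct : Act T Φ) (hSup : SupC Φ) (hA : CondA Φ) :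
    ∀ ψ : CMap X, Φ ψ ≤ PhiA (ZeroPhi Φ) ψ := by
  intro ψ
  rw [← Subtype.coe_le_coe]
  set s : ℝ := ((PhiA (ZeroPhi Φ) ψ : I) : ℝ) with hs
  have hs0 : 0 ≤ s := (PhiA (ZeroPhi Φ) ψ).2.1
  have hmem : ∀ x ∈ ZeroPhi Φ, (ψ.toFun x : ℝ) ≤ s := by
    intro x hx
    exact le_csSup ⟨1, by rintro r ⟨z, _, rfl⟩; exact (ψ.toFun z).2.2⟩ ⟨x, hx, rfl⟩
  refine le_of_forall_pos_le_add fun ε hε => ?_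
  by_cases h1 : (1:ℝ) ≤ s + ε
  · exact le_trans (Φ ψ).2.2 h1
  push_neg at h1
  set c : I := ⟨s + ε, ⟨by linarith, h1.le⟩⟩ with hc
  -- key claim: for every t < 1, t ⊗ Φψ ≤ c
  have key : ∀ t : I, (t:ℝ) < 1 → ((T.mul t (Φ ψ) : I) : ℝ) ≤ s + ε := by
    intro t ht
    set K : Set X := {y | (c:ℝ) ≤ (ψ.toFun y : ℝ)} with hK
    have hKclosed : IsClosed K :=
      isClosed_le continuous_const (continuous_subtype_val.comp ψ.continuous')
    have hKcpt : IsCompact K := hKclosed.isCompact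
    have hpt : ∀ x : ↥K, ∃ ψ' : CMap X, ψ'.toFun x = 1 ∧ Φ ψ' = 0 := by
      rintro ⟨x, hx⟩
      have hxz : x ∉ ZeroPhi Φ := by
        intro hmemx
        have h2 := hmem x hmemx
        have h3 : (c:ℝ) ≤ (ψ.toFun x : ℝ) := hx
        rw [hc] at h3
        simp only at h3
        linarith
      simp only [ZeroPhi, mem_setOf_eq, not_forall] at hxz
      obtain ⟨ψ₀, hψ₀0, hψ₀x⟩ := hxz
      exact hA x ψ₀ hψ₀0 ((nonneg' : (0:I) ≤ ψ₀.toFun x).lt_of_ne (fun h => hψ₀x h.symm))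
    choose ψb hψb1 hψb0 using hpt
    set U : ↥K → Set X := fun i => {y | (t:ℝ) < ((ψb i).toFun y : ℝ)} with hU
    have hUopen : ∀ i, IsOpen (U i) := fun i =>
      isOpen_lt continuous_const (continuous_subtype_val.comp (ψb i).continuous')
    have hcover : K ⊆ ⋃ i, U i := by
      intro x hx
      refine mem_iUnion.mpr ⟨⟨x, hx⟩, ?_⟩
      show (t:ℝ) < ((ψb ⟨x, hx⟩).toFun x : ℝ)
      rw [hψb1 ⟨x, hx⟩]
      exact ht
    obtain ⟨F, hF⟩ := hKcpt.elim_finite_subcover U hUopen hcover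
    set base : CMap X := CMap.smul T 0 CMap.one with hbase
    have hbase0 : Φ base = 0 := by
      rw [hAct]
      exact le_antisymm (T.mul_le_left'' _ _) (nonneg' : (0:I) ≤ _)
    set χ : CMap X := (F.toList.map ψb).foldr CMap.sup base with hχ
    have hχ0 : Φ χ = 0 := by
      refine phi_foldr_zero Φ hSup base hbase0 _ ?_
      intro ψ' h'
      obtain ⟨i, _, rfl⟩ := List.mem_map.mp h'
      exact hψb0 i
    have hpw : ∀ y, (CMap.smul T t ψ).toFun y ≤ ((CMap.smul T c CMap.one).sup χ).toFun y := by
      intro y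
      show T.mul t (ψ.toFun y) ≤ _
      show _ ≤ max (T.mul c 1) (χ.toFun y)
      have hc1 : T.mul c 1 = c := by rw [T.comm, T.one_mul']
      by_cases hy : y ∈ K
      · obtain ⟨i, hiF, hyU⟩ := mem_iUnion₂.mp (hF hy)
        have hle1 : (ψb i).toFun y ≤ χ.toFun y :=
          le_foldr_sup base y _ _ (List.mem_map_of_mem (f := ψb) (Finset.mem_toList.mpr hiF))
        have hle2 : T.mul t (ψ.toFun y) ≤ t := T.mul_le_left'' _ _
        have hle3 : t ≤ (ψb i).toFun y := le_of_lt (Subtype.coe_lt_coe.mp hyU)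
        exact le_trans (le_trans hle2 (le_trans hle3 hle1)) (le_max_right _ _)
      · have hlt : (ψ.toFun y : ℝ) ≤ (c:ℝ) := le_of_lt (lt_of_not_ge hy)
        have : T.mul t (ψ.toFun y) ≤ c :=
          le_trans (T.mul_le_right'' _ _) (Subtype.coe_le_coe.mp hlt)
        rw [hc1]
        exact le_trans this (le_max_left _ _)
    have hmono := hMon _ _ hpw
    rw [hAct] at hmono
    rw [hSup, hAct, hχ0] at hmono
    have hcc : T.mul c (Φ CMap.one) ≤ c := T.mul_le_left'' _ _
    have : T.mul t (Φ ψ) ≤ c := le_trans hmono (max_le hcc (nonneg' : (0:I) ≤ c))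
    exact Subtype.coe_le_coe.mpr this
  -- take the limit t → 1
  have htn_mem : ∀ n : ℕ, (1 - 1/((n:ℝ)+1)) ∈ Icc (0:ℝ) 1 := by
    intro n
    constructor
    · have h2 : 1/((n:ℝ)+1) ≤ 1 := by
        rw [div_le_one (by positivity)]
        linarith [(Nat.cast_nonneg n : (0:ℝ) ≤ n)]
      linarith
    · have h2 : 0 < 1/((n:ℝ)+1) := by positivity
      linarith
  set tn : ℕ → I := fun n => ⟨1 - 1/((n:ℝ)+1), htn_mem n⟩ with htn
  have htn_lt : ∀ n, ((tn n : I) : ℝ) < 1 := by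
    intro n
    have h2 : 0 < 1/((n:ℝ)+1) := by positivity
    show 1 - 1/((n:ℝ)+1) < 1
    linarith
  have htends : Filter.Tendsto tn Filter.atTop (𝓝 (1 : I)) := by
    rw [show (1 : I) = ⟨1, by norm_num⟩ from rfl, tendsto_subtype_rng]
    have h2 := tendsto_const_nhds (x := (1:ℝ)) (f := Filter.atTop (α := ℕ))
    have h3 := h2.sub tendsto_one_div_add_atTop_nhds_zero_nat
    simpa [htn] using h3
  have hmul : Filter.Tendsto (fun n => ((T.mul (tn n) (Φ ψ) : I) : ℝ))
      Filter.atTop (𝓝 ((Φ ψ : I) : ℝ)) := by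
    have h1 : Filter.Tendsto (fun n => (tn n, Φ ψ)) Filter.atTop (𝓝 ((1 : I), Φ ψ)) :=
      htends.prodMk_nhds tendsto_const_nhds
    have h2 : Filter.Tendsto (fun n => T.mul (tn n) (Φ ψ)) Filter.atTop
        (𝓝 (T.mul 1 (Φ ψ))) := (T.continuous.tendsto ((1 : I), Φ ψ)).comp h1
    rw [T.one_mul'] at h2
    exact (continuous_subtype_val.tendsto _).comp h2
  exact le_of_tendsto hmul (Filter.Eventually.of_forall fun n => key (tn n) (htn_lt n))
end

section
/- Assume ⊗ is either multiplication u·v or the Łukasiewicz tensor u⊙v = max(0,u+v−1) on [0,1]. Let X be a partially ordered compact space and Φ : CX → [0,1] a map satisfying (Mon), (Act) and (Ten)lax. Then Zero(Φ) = Anti(Φ). -/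
open unitInterval Set

/-- n-fold pointwise tensor power of a `CMap`. -/
def powMap {X : Type*} [TopologicalSpace X] [Preorder X] (T : ContinuousTNorm)
    (ψ : CMap X) : ℕ → CMap X
  | 0 => CMap.one
  | n + 1 => CMap.tens T ψ (powMap T ψ n)

lemma phi_powMap_le {X : Type*} [TopologicalSpace X] [Preorder X]
    (T : ContinuousTNorm) (Φ : CMap X → I) (hTen : TenLax T Φ) (ψ : CMap X) :
    ∀ n, Φ (powMap T ψ n) ≤ T.pow (Φ ψ) n
  | 0 => by
      show Φ CMap.one ≤ (1 : I)
      exact le_one'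
  | n + 1 =>
      le_trans (hTen ψ (powMap T ψ n)) (T.mono le_rfl (phi_powMap_le T Φ hTen ψ n))

/-- For `⊗` multiplication or the Łukasiewicz tensor, any `Φ : CX → [0,1]` satisfying
`(Mon)`, `(Act)` and `(Ten)lax` has `Zero(Φ) = Anti(Φ)`. -/
theorem zeroPhi_eq_antiPhi (T : ContinuousTNorm)
    (hT : (∀ u v : I, ((T.mul u v : I) : ℝ) = (u : ℝ) * (v : ℝ)) ∨
          (∀ u v : I, ((T.mul u v : I) : ℝ) = max 0 ((u : ℝ) + (v : ℝ) - 1))) {X : Type*} [TopologicalSpace X] [CompactSpace X]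
    [PartialOrder X] (hle : IsClosed {p : X × X | p.1 ≤ p.2})
    (Φ : CMap X → I) (hMon : Mon Φ) (hAct : Act T Φ) (hTen : TenLax T Φ) :
    ZeroPhi Φ = AntiPhi Φ := by
  ext x
  constructor
  · -- Zero ⊆ Anti
    intro hx ψ
    by_contra hlt
    push_neg at hlt
    set c : I := Φ ψ with hc
    set a : I := ψ.toFun x with ha
    have hca : (c : ℝ) < (a : ℝ) := hlt
    rcases hT with hmul | hluk
    · -- multiplication case
      by_cases hc0 : (c : ℝ) = 0
      · have hz : ψ.toFun x = 0 := hx ψ (Subtype.ext hc0)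
        have ha0 : (a : ℝ) = 0 := by rw [ha, hz]; simp
        rw [ha0, hc0] at hca
        exact lt_irrefl 0 hca
      have hcpos : (0 : ℝ) < (c : ℝ) := lt_of_le_of_ne c.2.1 (Ne.symm hc0)
      set b : ℝ := ((c : ℝ) + (a : ℝ)) / 2 with hbdef
      have hcb : (c : ℝ) < b := by rw [hbdef]; linarith
      have hba : b < (a : ℝ) := by rw [hbdef]; linarith
      have hbpos : 0 < b := lt_trans hcpos hcb
      have hb1 : b ≤ 1 := le_trans (le_of_lt hba) a.2.2
      -- φ = min(ψ/b, 1)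
      set φ : CMap X :=
        { toFun := fun y => ⟨min ((ψ.toFun y : ℝ) / b) 1,
            le_min (div_nonneg (ψ.toFun y).2.1 (le_of_lt hbpos)) zero_le_one,
            min_le_right _ _⟩
          continuous' := by
            apply Continuous.subtype_mk
            exact ((continuous_subtype_val.comp ψ.continuous').div_const b).min
              continuous_const
          antitone' := by
            intro y z hyz
            apply Subtype.mk_le_mk.mpr
            have : (ψ.toFun z : ℝ) ≤ (ψ.toFun y : ℝ) := ψ.antitone' hyz
            exact min_le_min (div_le_div_of_nonneg_right this hbpos.le) le_rfl } with hφdef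
      -- g = clamp((ψ - b)/(a - b))
      have habpos : (0 : ℝ) < (a : ℝ) - b := by linarith
      set g : CMap X :=
        { toFun := fun y => ⟨max (min (((ψ.toFun y : ℝ) - b) / ((a : ℝ) - b)) 1) 0,
            le_max_right _ _,
            max_le (min_le_right _ _) zero_le_one⟩
          continuous' := by
            apply Continuous.subtype_mk
            exact ((((continuous_subtype_val.comp ψ.continuous').sub
              continuous_const).div_const _).min continuous_const).max continuous_const
          antitone' := by
            intro y z hyz
            apply Subtype.mk_le_mk.mpr
            have : (ψ.toFun z : ℝ) ≤ (ψ.toFun y : ℝ) := ψ.antitone' hyz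
            exact max_le_max (min_le_min
              (div_le_div_of_nonneg_right (by linarith) habpos.le) le_rfl) le_rfl } with hgdef
      -- value of tensor powers pointwise
      have hpowy : ∀ (χ : CMap X) (n : ℕ) (y : X),
          (((powMap T χ n).toFun y : I) : ℝ) = ((χ.toFun y : ℝ)) ^ n := by
        intro χ n
        induction n with
        | zero => intro y; simp [powMap, CMap.one]
        | succ n ih =>
          intro y
          show ((T.mul (χ.toFun y) ((powMap T χ n).toFun y) : I) : ℝ) = _
          rw [hmul, ih y, pow_succ]
          ring
      -- value of T.pow
      have hpowc : ∀ n, ((T.pow c n : I) : ℝ) = (c : ℝ) ^ n := by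
        intro n
        induction n with
        | zero => simp [ContinuousTNorm.pow]
        | succ n ih =>
          show ((T.mul c (T.pow c n) : I) : ℝ) = _
          rw [hmul, ih, pow_succ]
          ring
      -- b * φ ≤ ψ pointwise
      have hbφ : ∀ y, b * ((φ.toFun y : ℝ)) ≤ (ψ.toFun y : ℝ) := by
        intro y
        have : b * min ((ψ.toFun y : ℝ) / b) 1 ≤ b * ((ψ.toFun y : ℝ) / b) :=
          mul_le_mul_of_nonneg_left (min_le_left _ _) (le_of_lt hbpos)
        calc b * ((φ.toFun y : ℝ)) ≤ b * ((ψ.toFun y : ℝ) / b) := this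
          _ = (ψ.toFun y : ℝ) := mul_div_cancel₀ _ (ne_of_gt hbpos)
      -- key estimate : Φ(φⁿ) ≤ (c/b)^n
      have hkey : ∀ n, ((Φ (powMap T φ n) : I) : ℝ) ≤ ((c : ℝ) / b) ^ n := by
        intro n
        set u : I := ⟨b ^ n, pow_nonneg (le_of_lt hbpos) n, pow_le_one₀ (le_of_lt hbpos) hb1⟩
          with hu
        have hpt : ∀ y, (CMap.smul T u (powMap T φ n)).toFun y ≤ (powMap T ψ n).toFun y := by
          intro y
          apply Subtype.coe_le_coe.mp
          show ((T.mul u ((powMap T φ n).toFun y) : I) : ℝ) ≤ _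
          rw [hmul, hpowy φ n y, hpowy ψ n y]
          show b ^ n * ((φ.toFun y : ℝ)) ^ n ≤ _
          rw [← mul_pow]
          exact pow_le_pow_left₀ (mul_nonneg (le_of_lt hbpos) (φ.toFun y).2.1) (hbφ y) n
        have h1 : Φ (CMap.smul T u (powMap T φ n)) ≤ Φ (powMap T ψ n) :=
          hMon _ _ hpt
        have h2 : Φ (powMap T ψ n) ≤ T.pow c n := phi_powMap_le T Φ hTen ψ n
        have h3 : ((Φ (CMap.smul T u (powMap T φ n)) : I) : ℝ)
            = b ^ n * ((Φ (powMap T φ n) : I) : ℝ) := by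
          rw [hAct u (powMap T φ n), hmul]
        have h4 : b ^ n * ((Φ (powMap T φ n) : I) : ℝ) ≤ (c : ℝ) ^ n := by
          rw [← h3, ← hpowc n]
          exact le_trans (Subtype.coe_le_coe.mpr h1) (Subtype.coe_le_coe.mpr h2)
        rw [div_pow, le_div_iff₀ (pow_pos hbpos n), mul_comm]
        exact h4
      -- g ≤ φⁿ pointwise
      have hgφ : ∀ n y, g.toFun y ≤ (powMap T φ n).toFun y := by
        intro n y
        apply Subtype.coe_le_coe.mp
        rw [hpowy φ n y]
        rcases le_or_gt (ψ.toFun y : ℝ) b with h | h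
        · have : ((g.toFun y : I) : ℝ) = max (min (((ψ.toFun y : ℝ) - b) / ((a : ℝ) - b)) 1) 0 :=
            rfl
          rw [this]
          have hv : ((ψ.toFun y : ℝ) - b) / ((a : ℝ) - b) ≤ 0 :=
            div_nonpos_of_nonpos_of_nonneg (by linarith) (le_of_lt habpos)
          have : max (min (((ψ.toFun y : ℝ) - b) / ((a : ℝ) - b)) 1) 0 = 0 := by
            rw [max_eq_right]
            exact le_trans (min_le_left _ _) hv
          rw [this]
          exact pow_nonneg (φ.toFun y).2.1 n
        · have hφ1 : ((φ.toFun y : I) : ℝ) = 1 := by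
            show min ((ψ.toFun y : ℝ) / b) 1 = 1
            rw [min_eq_right]
            rw [le_div_iff₀ hbpos]
            linarith
          rw [hφ1, one_pow]
          exact (g.toFun y).2.2
      -- conclude Φ g = 0
      have hΦg : ∀ n, ((Φ g : I) : ℝ) ≤ ((c : ℝ) / b) ^ n := fun n =>
        le_trans (Subtype.coe_le_coe.mpr (hMon _ _ (hgφ n))) (hkey n)
      have hr0 : (0 : ℝ) ≤ (c : ℝ) / b := div_nonneg c.2.1 (le_of_lt hbpos)
      have hr1 : (c : ℝ) / b < 1 := (div_lt_one hbpos).mpr hcb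
      have hlim : Filter.Tendsto (fun n : ℕ => ((c : ℝ) / b) ^ n) Filter.atTop (nhds 0) :=
        tendsto_pow_atTop_nhds_zero_of_lt_one hr0 hr1
      have hΦg0 : ((Φ g : I) : ℝ) ≤ 0 := ge_of_tendsto' hlim hΦg
      have : Φ g = 0 := Subtype.ext (le_antisymm hΦg0 (Φ g).2.1)
      have hgx := hx g this
      have hgx1 : ((g.toFun x : I) : ℝ) = 1 := by
        show max (min (((ψ.toFun x : ℝ) - b) / ((a : ℝ) - b)) 1) 0 = 1
        rw [← ha]
        rw [div_self (ne_of_gt habpos), min_self, max_eq_left zero_le_one]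
      rw [hgx] at hgx1
      simp at hgx1
    · -- Łukasiewicz case
      set u : ℝ := ((c : ℝ) + (a : ℝ)) / 2 with hudef
      have hcu : (c : ℝ) < u := by rw [hudef]; linarith
      have hua : u < (a : ℝ) := by rw [hudef]; linarith
      have hu0 : 0 ≤ u := le_trans c.2.1 (le_of_lt hcu)
      have hu1 : u ≤ 1 := le_trans (le_of_lt hua) a.2.2
      set w : I := ⟨1 - u, by constructor <;> linarith⟩ with hw
      have hΦ0 : Φ (CMap.smul T w ψ) = 0 := by
        apply Subtype.ext
        rw [hAct w ψ]
        show ((T.mul w c : I) : ℝ) = 0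
        rw [hluk]
        show max 0 ((1 - u) + (c : ℝ) - 1) = 0
        rw [max_eq_left (by linarith)]
      have := hx _ hΦ0
      have hval : (((CMap.smul T w ψ).toFun x : I) : ℝ) = (a : ℝ) - u := by
        show ((T.mul w (ψ.toFun x) : I) : ℝ) = _
        rw [hluk]
        show max 0 ((1 - u) + (a : ℝ) - 1) = _
        rw [max_eq_right (by linarith)]
        ring
      rw [this] at hval
      simp at hval
      linarith
  · -- Anti ⊆ Zero
    intro hx ψ hψ0
    have h := hx ψ
    rw [hψ0] at h
    exact le_antisymm h (ψ.toFun x).2.1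
end
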